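/- Let (X,s) be a strongly stratified sample of ℝ^N, let v = (v₁,v₂) and v' = (v₁',v₂') be elements of Ω, and set a := min(v₁,v₁') and b := max(v₂,v₂'). Then each of the three componentwise Hausdorff distances between D_v(X,s) and D_{v'}(X,s) is at most max( d_H(X^{v₁}_{v₂}, X^{v₁'}_{v₂'}), d_H(X^{a}_{v₂}, X^{a}_{v₂'}), d_H(X^{v₁}_{b}, X^{v₁'}_{b}) ). -/

import Mathlib

open Metric Set
open scoped ENNReal

namespace Stmt7

variable {N : ℕ}

/-- Sublevel set `X_{≤ b}`. -/
def sub (X : Set (EuclideanSpace ℝ (Fin N))) (s : EuclideanSpace ℝ (Fin N) → ℝ) (b : ℝ) :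
    Set (EuclideanSpace ℝ (Fin N)) := {x | x ∈ X ∧ s x ≤ b}

/-- Superlevel set `X_{≥ a}`. -/
def supl (X : Set (EuclideanSpace ℝ (Fin N))) (s : EuclideanSpace ℝ (Fin N) → ℝ) (a : ℝ) :
    Set (EuclideanSpace ℝ (Fin N)) := {x | x ∈ X ∧ a ≤ s x}

/-- Interval level set `X^a_b`. -/
def ival (X : Set (EuclideanSpace ℝ (Fin N))) (s : EuclideanSpace ℝ (Fin N) → ℝ) (a b : ℝ) :
    Set (EuclideanSpace ℝ (Fin N)) := {x | x ∈ X ∧ a ≤ s x ∧ s x ≤ b}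

/-- The parameter space `Ω = {(v₁,v₂) : 0 < v₁ < v₂ < 1}`. -/
def Omega : Set (ℝ × ℝ) := {p | 0 < p.1 ∧ p.1 < p.2 ∧ p.2 < 1}

/-- The stratification diagram `D_v(X,s) = (X_{≤v₂}, X^{v₁}_{v₂}, X_{≥v₁})`. -/
def Dv (X : Set (EuclideanSpace ℝ (Fin N))) (s : EuclideanSpace ℝ (Fin N) → ℝ) (v : ℝ × ℝ) :
    Set (EuclideanSpace ℝ (Fin N)) × Set (EuclideanSpace ℝ (Fin N)) ×
      Set (EuclideanSpace ℝ (Fin N)) :=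
  (sub X s v.2, ival X s v.1 v.2, supl X s v.1)

/-- Maximum of the three componentwise Hausdorff distances between two diagram triples. -/
noncomputable def diagDist
    (D D' : Set (EuclideanSpace ℝ (Fin N)) × Set (EuclideanSpace ℝ (Fin N)) ×
      Set (EuclideanSpace ℝ (Fin N))) : ℝ≥0∞ :=
  max (EMetric.hausdorffEdist D.1 D'.1)
    (max (EMetric.hausdorffEdist D.2.1 D'.2.1) (EMetric.hausdorffEdist D.2.2 D'.2.2))

/-- Two strongly stratified samples are `δ`-close. -/
def StronglyClose (δ : ℝ) (X X' : Set (EuclideanSpace ℝ (Fin N)))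
    (s s' : EuclideanSpace ℝ (Fin N) → ℝ) : Prop :=
  (∀ x ∈ X, ∃ y ∈ X', ‖x - y‖ ≤ δ ∧ |s x - s' y| ≤ δ) ∧
  (∀ y ∈ X', ∃ x ∈ X, ‖x - y‖ ≤ δ ∧ |s x - s' y| ≤ δ)

lemma aux_infEdist {N : ℕ} {x : EuclideanSpace ℝ (Fin N)}
    {S T B : Set (EuclideanSpace ℝ (Fin N))} (hx : x ∈ S) (hTB : T ⊆ B) :
    EMetric.infEdist x B ≤ EMetric.hausdorffEdist S T :=
  le_trans (EMetric.infEdist_anti hTB) (EMetric.infEdist_le_hausdorffEdist_of_mem hx)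

/-- The distance between the stratification diagrams `D_v(X,s)` and `D_{v'}(X,s)` is
bounded by the maximum of the Hausdorff distances of the corresponding link parts. -/
theorem diagram_distance_le_link_distances {N : ℕ}
    (X : Set (EuclideanSpace ℝ (Fin N))) (s : EuclideanSpace ℝ (Fin N) → ℝ)
    (hs : ∀ x ∈ X, s x ∈ Set.Icc (0 : ℝ) 1)
    (v₁ v₂ v₁' v₂' : ℝ) (hv : (v₁, v₂) ∈ Omega) (hv' : (v₁', v₂') ∈ Omega) :
    diagDist (Dv X s (v₁, v₂)) (Dv X s (v₁', v₂')) ≤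
      max (EMetric.hausdorffEdist (ival X s v₁ v₂) (ival X s v₁' v₂'))
        (max (EMetric.hausdorffEdist (ival X s (min v₁ v₁') v₂) (ival X s (min v₁ v₁') v₂'))
             (EMetric.hausdorffEdist (ival X s v₁ (max v₂ v₂')) (ival X s v₁' (max v₂ v₂')))) := by
  obtain ⟨hv1, hv12, hv2⟩ := hv
  obtain ⟨hv1', hv12', hv2'⟩ := hv'
  refine max_le ?_ (max_le ?_ ?_)
  · -- sublevel sets
    refine le_trans ?_ (le_max_of_le_right (le_max_left _ _))
    apply EMetric.hausdorffEdist_le_of_infEdist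
    · intro x hx
      by_cases h : s x ≤ v₂'
      · exact le_trans (le_of_eq (EMetric.infEdist_zero_of_mem (show x ∈ sub X s v₂' from ⟨hx.1, h⟩))) (zero_le)
      · have hxS : x ∈ ival X s (min v₁ v₁') v₂ :=
          ⟨hx.1, le_trans (min_le_right _ _) (le_of_lt (lt_trans hv12' (lt_of_not_ge h))), hx.2⟩
        exact aux_infEdist hxS (fun y hy => ⟨hy.1, hy.2.2⟩)
    · intro x hx
      by_cases h : s x ≤ v₂
      · exact le_trans (le_of_eq (EMetric.infEdist_zero_of_mem (show x ∈ sub X s v₂ from ⟨hx.1, h⟩))) (zero_le)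
      · have hxS : x ∈ ival X s (min v₁ v₁') v₂' :=
          ⟨hx.1, le_trans (min_le_left _ _) (le_of_lt (lt_trans hv12 (lt_of_not_ge h))), hx.2⟩
        refine le_trans ?_ (le_of_eq EMetric.hausdorffEdist_comm)
        exact aux_infEdist hxS (fun y hy => ⟨hy.1, hy.2.2⟩)
  · -- interval sets
    exact le_max_left _ _
  · -- superlevel sets
    refine le_trans ?_ (le_max_of_le_right (le_max_right _ _))
    apply EMetric.hausdorffEdist_le_of_infEdist
    · intro x hx
      by_cases h : v₁' ≤ s x
      · exact le_trans (le_of_eq (EMetric.infEdist_zero_of_mem (show x ∈ supl X s v₁' from ⟨hx.1, h⟩))) (zero_le)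
      · have hxS : x ∈ ival X s v₁ (max v₂ v₂') :=
          ⟨hx.1, hx.2, le_trans (le_of_lt (lt_trans (lt_of_not_ge h) hv12'))
            (le_max_right _ _)⟩
        exact aux_infEdist hxS (fun y hy => ⟨hy.1, hy.2.1⟩)
    · intro x hx
      by_cases h : v₁ ≤ s x
      · exact le_trans (le_of_eq (EMetric.infEdist_zero_of_mem (show x ∈ supl X s v₁ from ⟨hx.1, h⟩))) (zero_le)
      · have hxS : x ∈ ival X s v₁' (max v₂ v₂') :=
          ⟨hx.1, hx.2, le_trans (le_of_lt (lt_trans (lt_of_not_ge h) hv12))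
            (le_max_left _ _)⟩
        refine le_trans ?_ (le_of_eq EMetric.hausdorffEdist_comm)
        exact aux_infEdist hxS (fun y hy => ⟨hy.1, hy.2.1⟩)


end Stmt7
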